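/- The iterated-logarithm recursion depth is bounded: if r(N) = ⌈(log₂ N)²⌉ and N ≥ 2^16, then starting from N and repeatedly applying r, the number of steps needed to get below 2^16 is at most 2·log*(N), where log*(N) = min{i ≥ 0 : log₂^{(i)}(N) ≤ 1}. -/

import Mathlib

/-- The `i`-fold iterated base-2 logarithm. -/
noncomputable def iterLog : ℕ → ℝ → ℝ
  | 0, x => x
  | (i + 1), x => Real.logb 2 (iterLog i x)

/-- The iterated logarithm `log*`. -/
noncomputable def logStar (N : ℕ) : ℕ := sInf {i : ℕ | iterLog i (N : ℝ) ≤ 1}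

/-- The recursion-size function `r(N) = ⌈(log₂ N)²⌉`. -/
noncomputable def rfun (N : ℕ) : ℕ := ⌈(Real.logb 2 N) ^ 2⌉₊

/-- Tower of 2s: `Tow 0 = 1`, `Tow (n+1) = 2 ^ Tow n`. -/
def Tow : ℕ → ℕ
  | 0 => 1
  | n + 1 => 2 ^ Tow n

lemma Tow_pos (n : ℕ) : 0 < Tow n := by
  cases n with
  | zero => simp [Tow]
  | succ n => exact pow_pos (by norm_num) _

lemma lt_Tow (n : ℕ) : n < Tow n := by
  induction n with
  | zero => simp [Tow]
  | succ n ih =>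
    have h : Tow n < 2 ^ Tow n := Nat.lt_two_pow_self
    have : n + 1 ≤ Tow n := ih
    calc n + 1 ≤ Tow n := ih
    _ < Tow (n + 1) := h

lemma Tow_lt_succ (n : ℕ) : Tow n < Tow (n + 1) := Nat.lt_two_pow_self

lemma Tow_mono : Monotone Tow := monotone_nat_of_le_succ fun n => (Tow_lt_succ n).le

lemma logb_two_pow (n : ℕ) : Real.logb 2 ((2 : ℝ) ^ n) = n := by
  rw [Real.logb_pow, Real.logb_self_eq_one (by norm_num)]
  ring

lemma logb_Tow_succ (n : ℕ) : Real.logb 2 ((Tow (n + 1) : ℕ) : ℝ) = (Tow n : ℝ) := by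
  show Real.logb 2 (((2 ^ Tow n : ℕ) : ℝ)) = _
  push_cast
  exact logb_two_pow _

lemma iterLog_Tow (i m : ℕ) (h : i ≤ m) : iterLog i ((Tow m : ℕ) : ℝ) = (Tow (m - i) : ℝ) := by
  induction i with
  | zero => simp [iterLog]
  | succ i ih =>
    have hi : i ≤ m := le_of_lt (Nat.lt_of_succ_le h)
    have hmi : m - i = (m - (i + 1)) + 1 := by omega
    rw [show iterLog (i + 1) ((Tow m : ℕ) : ℝ) = Real.logb 2 (iterLog i ((Tow m : ℕ) : ℝ))
      from rfl, ih hi, hmi, logb_Tow_succ]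

/-- Monotonicity of `iterLog` for arguments at least `Tow i`, plus a lower bound. -/
lemma iterLog_mono (i : ℕ) : ∀ x y : ℝ, ((Tow i : ℕ) : ℝ) ≤ x → x ≤ y →
    1 ≤ iterLog i x ∧ iterLog i x ≤ iterLog i y := by
  induction i with
  | zero =>
    intro x y hx hxy
    have hx1 : (1 : ℝ) ≤ x := by
      have : ((Tow 0 : ℕ) : ℝ) = 1 := by norm_num [Tow]
      linarith [this ▸ hx]
    exact ⟨hx1, hxy⟩
  | succ i ih =>
    intro x y hx hxy
    have hTow : ((Tow i : ℕ) : ℝ) ≤ ((Tow (i + 1) : ℕ) : ℝ) := by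
      exact_mod_cast (Tow_lt_succ i).le
    -- iterLog i x ≥ iterLog i (Tow (i+1)) = Tow 1 = 2
    have h1 := ih ((Tow (i + 1) : ℕ) : ℝ) x hTow hx
    have heq : iterLog i ((Tow (i + 1) : ℕ) : ℝ) = ((Tow 1 : ℕ) : ℝ) := by
      have h := iterLog_Tow i (i + 1) (by omega)
      rw [show i + 1 - i = 1 by omega] at h
      exact h
    have h2 : (2 : ℝ) ≤ iterLog i x := by
      have : ((Tow 1 : ℕ) : ℝ) = (2 : ℝ) := by norm_num [Tow]
      rw [← this, ← heq]
      exact h1.2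
    have h3 := ih x y (le_trans hTow hx) hxy
    have hxpos : (0 : ℝ) < iterLog i x := by linarith
    constructor
    · show 1 ≤ Real.logb 2 (iterLog i x)
      calc (1 : ℝ) = Real.logb 2 2 := (Real.logb_self_eq_one (by norm_num)).symm
      _ ≤ Real.logb 2 (iterLog i x) :=
        Real.logb_le_logb_of_le (by norm_num) (by norm_num) h2
    · show Real.logb 2 (iterLog i x) ≤ Real.logb 2 (iterLog i y)
      exact Real.logb_le_logb_of_le (by norm_num) hxpos h3.2

lemma logb_nat_nonneg (M : ℕ) : 0 ≤ Real.logb 2 (M : ℝ) := by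
  rcases Nat.eq_zero_or_pos M with h | h
  · simp [h]
  · exact Real.logb_nonneg (by norm_num) (by exact_mod_cast h)

lemma rfun_le (M n : ℕ) (h : M ≤ 2 ^ n) : rfun M ≤ n ^ 2 := by
  have h0 : 0 ≤ Real.logb 2 (M : ℝ) := logb_nat_nonneg M
  have h1 : Real.logb 2 (M : ℝ) ≤ (n : ℝ) := by
    rcases Nat.eq_zero_or_pos M with hM | hM
    · simp [hM]
    · calc Real.logb 2 (M : ℝ) ≤ Real.logb 2 ((2 : ℝ) ^ n) := by
            apply Real.logb_le_logb_of_le (by norm_num) (by exact_mod_cast hM)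
            exact_mod_cast h
      _ = (n : ℝ) := logb_two_pow n
  have h2 : (Real.logb 2 (M : ℝ)) ^ 2 ≤ (n : ℝ) ^ 2 := by
    apply pow_le_pow_left₀ h0 h1
  rw [rfun]
  rw [Nat.ceil_le]
  exact_mod_cast h2
  
lemma descent (t M : ℕ) (hM : M ≤ 2 ^ 2 ^ t) : rfun (rfun M) ≤ (2 * t) ^ 2 := by
  have h1 : rfun M ≤ (2 ^ t) ^ 2 := rfun_le M (2 ^ t) hM
  have h2 : (2 ^ t) ^ 2 = 2 ^ (2 * t) := by rw [← pow_mul, mul_comm]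
  exact rfun_le (rfun M) (2 * t) (by omega)

lemma sq_lt_two_pow (t : ℕ) (ht : 9 ≤ t) : (2 * t) ^ 2 < 2 ^ t := by
  induction t with
  | zero => omega
  | succ t ih =>
    rcases Nat.lt_or_ge t 9 with h | h
    · have h8 : t = 8 := by omega
      subst h8
      norm_num
    · have h1 := ih h
      have h2 : (2 * (t + 1)) ^ 2 ≤ 2 * (2 * t) ^ 2 := by nlinarith
      calc (2 * (t + 1)) ^ 2 ≤ 2 * (2 * t) ^ 2 := h2
      _ < 2 * 2 ^ t := by omega
      _ = 2 ^ (t + 1) := by ring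

/-- Main induction: if `M < Tow (j + 5)` then within `2j + 2` steps we get below `2^16`. -/
lemma main_ind : ∀ j M : ℕ, M < Tow (j + 5) → ∃ k ≤ 2 * j + 2, rfun^[k] M < 2 ^ 16 := by
  intro j
  induction j with
  | zero =>
    intro M hM
    refine ⟨2, by norm_num, ?_⟩
    have h4 : Tow 4 = 2 ^ 16 := by norm_num [Tow]
    have h5 : Tow (0 + 5) = 2 ^ 2 ^ 16 := by
      show 2 ^ Tow 4 = _
      rw [h4]
    have hM' : M ≤ 2 ^ 2 ^ 16 := by rw [h5] at hM; exact hM.le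
    have h := descent 16 M hM'
    have h2 : rfun^[2] M = rfun (rfun M) := by
      simp [Function.iterate_succ_apply']
    rw [h2]
    calc rfun (rfun M) ≤ (2 * 16) ^ 2 := h
    _ < 2 ^ 16 := by norm_num
  | succ j ih =>
    intro M hM
    have ht : Tow (j + 6) = 2 ^ 2 ^ Tow (j + 4) := by
      show Tow (j + 5 + 1) = _
      rw [show Tow (j + 5 + 1) = 2 ^ Tow (j + 5) from rfl,
        show Tow (j + 5) = 2 ^ Tow (j + 4) from rfl]
    have h9 : 9 ≤ Tow (j + 4) := by
      have : 4 < Tow 4 := lt_Tow 4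
      have := Tow_mono (show 4 ≤ j + 4 by omega)
      have h4 : Tow 4 = 65536 := by norm_num [Tow]
      omega
    have hd : rfun (rfun M) ≤ (2 * Tow (j + 4)) ^ 2 := by
      apply descent
      rw [← ht]
      exact hM.le
    have hlt : rfun (rfun M) < Tow (j + 5) := by
      have hsq := sq_lt_two_pow (Tow (j + 4)) h9
      have h5 : Tow (j + 5) = 2 ^ Tow (j + 4) := rfl
      rw [h5]
      exact lt_of_le_of_lt hd hsq
    obtain ⟨k, hk, hk2⟩ := ih (rfun (rfun M)) hlt
    refine ⟨k + 2, by omega, ?_⟩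
    rw [Function.iterate_add_apply]
    have : rfun^[2] M = rfun (rfun M) := by simp [Function.iterate_succ_apply']
    rw [this]
    exact hk2

/-- The set defining `logStar N` is nonempty for `N ≥ 1`. -/
lemma logStar_set_nonempty (N : ℕ) (hN : 1 ≤ N) :
    {i : ℕ | iterLog i (N : ℝ) ≤ 1}.Nonempty := by
  have hex : ∃ m, N < Tow m := ⟨N, lt_Tow N⟩
  classical
  set M := Nat.find hex with hMdef
  have hM : N < Tow M := Nat.find_spec hex
  have hM1 : 1 ≤ M := by
    rcases Nat.eq_zero_or_pos M with h | h
    · exfalso; rw [h] at hM; simp [Tow] at hM; omega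
    · exact h
  have hlow : Tow (M - 1) ≤ N := by
    by_contra hcon
    push_neg at hcon
    have h' : Nat.find hex ≤ M - 1 := Nat.find_le hcon
    omega
  refine ⟨M, ?_⟩
  have hmono := iterLog_mono (M - 1) ((N : ℕ) : ℝ) ((Tow M : ℕ) : ℝ)
    (by exact_mod_cast hlow) (by exact_mod_cast hM.le)
  have heq : iterLog (M - 1) ((Tow M : ℕ) : ℝ) = ((Tow 1 : ℕ) : ℝ) := by
    have h := iterLog_Tow (M - 1) M (by omega)
    rw [show M - (M - 1) = 1 by omega] at h
    exact h
  have h2 : iterLog (M - 1) ((N : ℕ) : ℝ) ≤ 2 := by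
    have : ((Tow 1 : ℕ) : ℝ) = 2 := by norm_num [Tow]
    rw [← this, ← heq]; exact hmono.2
  have hstep : iterLog M ((N : ℕ) : ℝ) = Real.logb 2 (iterLog (M - 1) ((N : ℕ) : ℝ)) := by
    conv_lhs => rw [show M = (M - 1) + 1 by omega]
    rfl
  show iterLog M ((N : ℕ) : ℝ) ≤ 1
  rw [hstep]
  calc Real.logb 2 (iterLog (M - 1) ((N : ℕ) : ℝ)) ≤ Real.logb 2 2 :=
        Real.logb_le_logb_of_le (by norm_num) (by linarith [hmono.1]) h2
  _ = 1 := Real.logb_self_eq_one (by norm_num)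

/-- Lower bound for `logStar`. -/
lemma le_logStar (N m : ℕ) (h : Tow m ≤ N) : m ≤ logStar N := by
  have hne : {i : ℕ | iterLog i (N : ℝ) ≤ 1}.Nonempty :=
    logStar_set_nonempty N (le_trans (Tow_pos m) h)
  have key : ∀ i ∈ {i : ℕ | iterLog i (N : ℝ) ≤ 1}, m ≤ i := by
    intro i hi
    by_contra hcon
    push_neg at hcon
    have hmono := iterLog_mono i ((Tow m : ℕ) : ℝ) ((N : ℕ) : ℝ)
      (by exact_mod_cast Tow_mono hcon.le) (by exact_mod_cast h)
    have heq : iterLog i ((Tow m : ℕ) : ℝ) = ((Tow (m - i) : ℕ) : ℝ) :=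
      iterLog_Tow i m hcon.le
    have h2 : (2 : ℝ) ≤ iterLog i ((Tow m : ℕ) : ℝ) := by
      rw [heq]
      have : Tow 1 ≤ Tow (m - i) := Tow_mono (by omega)
      have h1 : Tow 1 = 2 := by norm_num [Tow]
      exact_mod_cast (by omega : 2 ≤ Tow (m - i))
    have : (2 : ℝ) ≤ iterLog i ((N : ℕ) : ℝ) := le_trans h2 hmono.2
    have hle : iterLog i ((N : ℕ) : ℝ) ≤ 1 := hi
    linarith
  exact le_csInf hne key

theorem stmt_6 (N : ℕ) (hN : 2 ^ 16 ≤ N) :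
    ∃ k ≤ 2 * logStar N, rfun^[k] N < 2 ^ 16 := by
  have hex : ∃ j, N < Tow (j + 5) := by
    refine ⟨N, ?_⟩
    have := lt_Tow (N + 5)
    omega
  classical
  set j := Nat.find hex with hjdef
  have hj : N < Tow (j + 5) := Nat.find_spec hex
  obtain ⟨k, hk, hk2⟩ := main_ind j N hj
  refine ⟨k, ?_, hk2⟩
  have hls : j + 1 ≤ logStar N := by
    rcases Nat.eq_zero_or_pos j with h0 | h0
    · -- need 1 ≤ logStar N : show 0 not in the set and nonempty
      rw [h0]
      have hne := logStar_set_nonempty N (by omega)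
      have h0nin : (0 : ℕ) ∉ {i : ℕ | iterLog i (N : ℝ) ≤ 1} := by
        intro hmem
        have : ((N : ℕ) : ℝ) ≤ 1 := hmem
        have : (2 ^ 16 : ℝ) ≤ ((N : ℕ) : ℝ) := by exact_mod_cast hN
        linarith
      rcases Nat.eq_zero_or_pos (logStar N) with hz | hz
      · exfalso
        have := Nat.sInf_mem hne
        rw [show sInf {i : ℕ | iterLog i (N : ℝ) ≤ 1} = logStar N from rfl, hz] at this
        exact h0nin this
      · omega
    · have hlow : Tow (j - 1 + 5) ≤ N := by
        by_contra hcon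
        push_neg at hcon
        have h' : Nat.find hex ≤ j - 1 := Nat.find_le hcon
        omega
      have := le_logStar N (j - 1 + 5) hlow
      omega
  omega
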